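/- The variance of the geometric distribution of order k is Var(N_k) = 1/(q p^k)^2 - (2k+1)/(q p^k) - p/q^2. -/

import Mathlib

open Finset

attribute [local instance] Classical.propDecidable

/-- `hasRunEnd k n ω m` : in the outcome string `ω` of `n` Bernoulli trials, a run of
`k` consecutive successes ends at trial `m` (trials `m-k+1, ..., m` are successes). -/
def hasRunEnd (k n : ℕ) (ω : Fin n → Bool) (m : ℕ) : Prop :=
  k ≤ m ∧ m ≤ n ∧ ∀ j : Fin n, m - k ≤ (j : ℕ) → (j : ℕ) < m → ω j = true

/-- The first run of `k` consecutive successes is completed exactly at trial `n`. -/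
def firstRun (k n : ℕ) (ω : Fin n → Bool) : Prop :=
  hasRunEnd k n ω n ∧ ∀ m < n, ¬ hasRunEnd k n ω m

/-- The pmf of the geometric distribution of order `k`:
`fk k p n = P(N_k = n)` where `N_k` is the waiting time for the first run of `k`
consecutive successes in i.i.d. Bernoulli(`p`) trials; each outcome string contributes
`p^{#successes} (1-p)^{#failures}`. -/
noncomputable def fk (k : ℕ) (p : ℝ) (n : ℕ) : ℝ :=
  ∑ ω ∈ Finset.univ.filter (fun ω : Fin n → Bool => firstRun k n ω),
    p ^ (Finset.univ.filter (fun i => ω i = true)).card *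
      (1 - p) ^ (Finset.univ.filter (fun i => ω i = false)).card

noncomputable def wt (p : ℝ) (n : ℕ) (ω : Fin n → Bool) : ℝ :=
  ∏ i, (if ω i = true then p else 1 - p)

lemma wt_eq (p : ℝ) (n : ℕ) (ω : Fin n → Bool) :
    wt p n ω = p ^ (Finset.univ.filter (fun i => ω i = true)).card *
      (1 - p) ^ (Finset.univ.filter (fun i => ω i = false)).card := by
  rw [wt, Finset.prod_ite]
  simp [Bool.not_eq_true]

lemma fk_eq (k : ℕ) (p : ℝ) (n : ℕ) :
    fk k p n = ∑ ω ∈ Finset.univ.filter (fun ω : Fin n → Bool => firstRun k n ω), wt p n ω := by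
  rw [fk]
  exact Finset.sum_congr rfl fun ω _ => (wt_eq p n ω).symm

lemma wt_nonneg {p : ℝ} (hp0 : 0 ≤ p) (hp1 : p ≤ 1) (n : ℕ) (ω : Fin n → Bool) :
    0 ≤ wt p n ω := by
  apply Finset.prod_nonneg
  intro i _
  split <;> linarith

lemma wt_total (p : ℝ) (n : ℕ) : ∑ ω : Fin n → Bool, wt p n ω = 1 := by
  have h := Finset.prod_univ_sum (fun _ : Fin n => (univ : Finset Bool))
    (fun _ b => if b = true then p else 1 - p)
  simp only [Fintype.piFinset_univ] at h
  have : ∑ ω : Fin n → Bool, wt p n ω = ∏ _i : Fin n, ∑ b : Bool, (if b = true then p else 1 - p) := by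
    rw [h]; rfl
  rw [this]
  simp

lemma sum_append (a b : ℕ) (F : (Fin (a + b) → Bool) → ℝ) :
    ∑ ω : Fin (a + b) → Bool, F ω
      = ∑ u : Fin a → Bool, ∑ v : Fin b → Bool, F (Fin.append u v) := by
  have h1 : ∑ uv : (Fin a → Bool) × (Fin b → Bool), F (Fin.append uv.1 uv.2)
      = ∑ ω : Fin (a + b) → Bool, F ω := by
    refine Fintype.sum_bijective (fun uv : (Fin a → Bool) × (Fin b → Bool) => Fin.append uv.1 uv.2)
      ?_ _ _ (fun x => rfl)
    rw [Fintype.bijective_iff_injective_and_card]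
    constructor
    · rintro ⟨u, v⟩ ⟨u', v'⟩ h
      simp only [Prod.mk.injEq]
      constructor
      · funext i
        have := congrFun h (Fin.castAdd b i)
        simpa using this
      · funext i
        have := congrFun h (Fin.natAdd a i)
        simpa using this
    · simp [Fintype.card_fun, pow_add]
  rw [← h1, Fintype.sum_prod_type]

lemma wt_append (p : ℝ) (a b : ℕ) (u : Fin a → Bool) (v : Fin b → Bool) :
    wt p (a + b) (Fin.append u v) = wt p a u * wt p b v := by
  rw [wt, Fin.prod_univ_add]
  simp only [Fin.append_left, Fin.append_right]
  rfl

lemma hasRunEnd_append_iff {k a b m : ℕ} (u : Fin a → Bool) (v : Fin b → Bool) (hm : m ≤ a) :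
    hasRunEnd k (a + b) (Fin.append u v) m ↔ hasRunEnd k a u m := by
  unfold hasRunEnd
  constructor
  · rintro ⟨h1, -, h3⟩
    refine ⟨h1, hm, fun j hj1 hj2 => ?_⟩
    have := h3 (Fin.castAdd b j) (by simpa using hj1) (by simpa using hj2)
    simpa using this
  · rintro ⟨h1, -, h3⟩
    refine ⟨h1, le_trans hm (Nat.le_add_right a b), fun j hj1 hj2 => ?_⟩
    have hj : (j : ℕ) < a := lt_of_lt_of_le hj2 hm
    have hje : j = Fin.castAdd b ⟨(j : ℕ), hj⟩ := by ext; simp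
    rw [hje, Fin.append_left]
    exact h3 _ hj1 hj2

def NR (k n : ℕ) (ω : Fin n → Bool) : Prop := ∀ m, ¬ hasRunEnd k n ω m

noncomputable def Zt (k : ℕ) (p : ℝ) (n : ℕ) : ℝ :=
  ∑ ω ∈ Finset.univ.filter (fun ω : Fin n → Bool => NR k n ω), wt p n ω

lemma NR_append_succ_iff {k n : ℕ} (u : Fin n → Bool) (v : Fin 1 → Bool) :
    NR k (n + 1) (Fin.append u v)
      ↔ NR k n u ∧ ¬ hasRunEnd k (n + 1) (Fin.append u v) (n + 1) := by
  constructor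
  · intro h
    refine ⟨fun m hc => h m ((hasRunEnd_append_iff u v hc.2.1).2 hc), h (n + 1)⟩
  · rintro ⟨h1, h2⟩ m hc
    rcases Nat.lt_or_ge m (n + 1) with hlt | hge
    · exact h1 m ((hasRunEnd_append_iff u v (Nat.lt_succ_iff.mp hlt)).1 hc)
    · have : m = n + 1 := le_antisymm hc.2.1 hge
      exact h2 (this ▸ hc)

lemma firstRun_append_succ_iff {k n : ℕ} (u : Fin n → Bool) (v : Fin 1 → Bool) :
    firstRun k (n + 1) (Fin.append u v)
      ↔ NR k n u ∧ hasRunEnd k (n + 1) (Fin.append u v) (n + 1) := by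
  unfold firstRun
  rw [and_comm]
  apply and_congr_left
  intro _
  constructor
  · intro h m hc
    exact h m (Nat.lt_succ_of_le hc.2.1) ((hasRunEnd_append_iff u v hc.2.1).2 hc)
  · intro h m hm hc
    exact h m ((hasRunEnd_append_iff u v (Nat.lt_succ_iff.mp hm)).1 hc)

lemma Zt_succ (k : ℕ) (p : ℝ) (n : ℕ) :
    Zt k p n = Zt k p (n + 1) + fk k p (n + 1) := by
  rw [Zt, Zt, fk_eq, Finset.sum_filter, Finset.sum_filter, Finset.sum_filter]
  have : ∀ u : Fin n → Bool, ∀ v : Fin 1 → Bool,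
      ((if NR k (n + 1) (Fin.append u v) then wt p (n + 1) (Fin.append u v) else 0)
        + (if firstRun k (n + 1) (Fin.append u v) then wt p (n + 1) (Fin.append u v) else 0))
      = (if NR k n u then wt p n u else 0) * wt p 1 v := by
    intro u v
    rw [NR_append_succ_iff, firstRun_append_succ_iff]
    by_cases hu : NR k n u <;>
      by_cases hr : hasRunEnd k (n + 1) (Fin.append u v) (n + 1) <;>
      simp [hu, hr, wt_append]
  calc ∑ u : Fin n → Bool, (if NR k n u then wt p n u else 0)
      = ∑ u : Fin n → Bool, (if NR k n u then wt p n u else 0) * 1 := by simp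
    _ = ∑ u : Fin n → Bool, ∑ v : Fin 1 → Bool,
          (if NR k n u then wt p n u else 0) * wt p 1 v := by
        refine Finset.sum_congr rfl fun u _ => ?_
        rw [← Finset.mul_sum, wt_total]
    _ = ∑ u : Fin n → Bool, ∑ v : Fin 1 → Bool,
        ((if NR k (n + 1) (Fin.append u v) then wt p (n + 1) (Fin.append u v) else 0)
          + (if firstRun k (n + 1) (Fin.append u v) then wt p (n + 1) (Fin.append u v) else 0)) := by
        refine Finset.sum_congr rfl fun u _ => Finset.sum_congr rfl fun v _ => (this u v).symm
    _ = (∑ u : Fin n → Bool, ∑ v : Fin 1 → Bool,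
          (if NR k (n + 1) (Fin.append u v) then wt p (n + 1) (Fin.append u v) else 0))
        + (∑ u : Fin n → Bool, ∑ v : Fin 1 → Bool,
          (if firstRun k (n + 1) (Fin.append u v) then wt p (n + 1) (Fin.append u v) else 0)) := by
        simp only [Finset.sum_add_distrib]
    _ = _ := by
        rw [← sum_append n 1 (fun ω => if NR k (n + 1) ω then wt p (n + 1) ω else 0),
          ← sum_append n 1 (fun ω => if firstRun k (n + 1) ω then wt p (n + 1) ω else 0)]

def vtail (k : ℕ) : Fin (k + 1) → Bool := fun i => decide (0 < (i : ℕ))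

lemma firstRun_append_tail_iff {k n : ℕ} (hk : 1 ≤ k) (u : Fin n → Bool) (v : Fin (k + 1) → Bool) :
    firstRun k (n + (k + 1)) (Fin.append u v) ↔ NR k n u ∧ v = vtail k := by
  constructor
  · rintro ⟨h1, h2⟩
    have hNR : NR k n u := by
      intro m hc
      exact h2 m (lt_of_le_of_lt hc.2.1 (by omega)) ((hasRunEnd_append_iff u v hc.2.1).2 hc)
    refine ⟨hNR, ?_⟩
    have hjtrue : ∀ j : Fin (k + 1), 0 < (j : ℕ) → v j = true := by
      intro j hj
      have := h1.2.2 (Fin.natAdd n j) (by simp; omega) (by simp; omega)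
      simpa using this
    have hv0 : v 0 = false := by
      by_contra hv
      have hv' : v 0 = true := by revert hv; cases h : v 0 <;> simp
      apply h2 (n + k) (by omega)
      refine ⟨by omega, by omega, fun j hj1 hj2 => ?_⟩
      rcases Nat.lt_or_ge (j : ℕ) n with hlt | hge
      · -- j < n : index in prefix; but it must be ≥ n since n + k - k = n
        omega
      · have hj' : (j : ℕ) - n < k + 1 := by omega
        have hje : j = Fin.natAdd n ⟨(j : ℕ) - n, hj'⟩ := by ext; simp; omega
        rw [hje, Fin.append_right]
        rcases Nat.eq_or_lt_of_le hge with he | hlt'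
        · have : (⟨(j : ℕ) - n, hj'⟩ : Fin (k + 1)) = 0 := by ext; simp; omega
          rw [this]; exact hv'
        · exact hjtrue _ (by simp; omega)
    funext j
    rcases Nat.eq_or_lt_of_le (Nat.zero_le (j : ℕ)) with he | hlt
    · have : j = 0 := by ext; simp only [Fin.val_zero]; omega
      rw [this, hv0]; simp [vtail]
    · rw [hjtrue j hlt]; simp [vtail]; rw [Fin.lt_def, Fin.val_zero]; exact hlt
  · rintro ⟨hNR, rfl⟩
    constructor
    · refine ⟨by omega, le_refl _, fun j hj1 hj2 => ?_⟩
      have hge : n + 1 ≤ (j : ℕ) := by omega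
      have hj' : (j : ℕ) - n < k + 1 := by omega
      have hje : j = Fin.natAdd n ⟨(j : ℕ) - n, hj'⟩ := by ext; simp; omega
      rw [hje, Fin.append_right]
      simp [vtail]; omega
    · intro m hm hc
      rcases Nat.lt_or_ge m (n + 1) with hle | hgt
      · exact hNR m ((hasRunEnd_append_iff u _ (Nat.lt_succ_iff.mp hle)).1 hc)
      · -- n < m < n + k + 1 : index n ∈ [m - k, m) is false
        have hn : n < n + (k + 1) := by omega
        have := hc.2.2 ⟨n, hn⟩ (by simp; omega) (by simp; omega)
        have hne : (⟨n, hn⟩ : Fin (n + (k + 1))) = Fin.natAdd n (0 : Fin (k + 1)) := by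
          ext; simp
        rw [hne, Fin.append_right] at this
        simp [vtail] at this

lemma wt_vtail (p : ℝ) (k : ℕ) : wt p (k + 1) (vtail k) = (1 - p) * p ^ k := by
  rw [wt, Fin.prod_univ_succ]
  simp [vtail]

lemma fk_renewal {k : ℕ} (hk : 1 ≤ k) (p : ℝ) (n : ℕ) :
    fk k p (n + (k + 1)) = (1 - p) * p ^ k * Zt k p n := by
  rw [fk_eq, Zt, Finset.sum_filter, Finset.sum_filter, sum_append n (k + 1)]
  have : ∀ u : Fin n → Bool, ∀ v : Fin (k + 1) → Bool,
      (if firstRun k (n + (k + 1)) (Fin.append u v) then wt p (n + (k + 1)) (Fin.append u v) else 0)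
      = (if NR k n u then wt p n u else 0) * (if v = vtail k then wt p (k + 1) v else 0) := by
    intro u v
    rw [firstRun_append_tail_iff hk]
    by_cases hu : NR k n u <;> by_cases hv : v = vtail k <;> simp [hu, hv, wt_append]
  calc ∑ u : Fin n → Bool, ∑ v : Fin (k + 1) → Bool,
        (if firstRun k (n + (k + 1)) (Fin.append u v) then wt p (n + (k + 1)) (Fin.append u v) else 0)
      = ∑ u : Fin n → Bool, (if NR k n u then wt p n u else 0)
          * ∑ v : Fin (k + 1) → Bool, (if v = vtail k then wt p (k + 1) v else 0) := by
        refine Finset.sum_congr rfl fun u _ => ?_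
        rw [Finset.mul_sum]
        exact Finset.sum_congr rfl fun v _ => this u v
    _ = (1 - p) * p ^ k * ∑ u : Fin n → Bool, (if NR k n u then wt p n u else 0) := by
        rw [← Finset.sum_mul]
        have : ∑ v : Fin (k + 1) → Bool, (if v = vtail k then wt p (k + 1) v else 0)
            = wt p (k + 1) (vtail k) := by
          rw [Finset.sum_ite_eq' Finset.univ (vtail k) (wt p (k + 1))]
          simp
        rw [this, wt_vtail]
        ring

lemma fk_eq_zero_of_lt {k n : ℕ} (h : n < k) (p : ℝ) : fk k p n = 0 := by
  rw [fk_eq]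
  apply Finset.sum_eq_zero
  intro ω hω
  rcases (Finset.mem_filter.mp hω).2 with ⟨⟨h1, h2, -⟩, -⟩
  omega

lemma fk_k (k : ℕ) (p : ℝ) : fk k p k = p ^ k := by
  rw [fk_eq]
  have hfilter : Finset.univ.filter (fun ω : Fin k → Bool => firstRun k k ω)
      = {fun _ => true} := by
    ext ω
    simp only [Finset.mem_filter, Finset.mem_univ, true_and, Finset.mem_singleton]
    constructor
    · intro h
      funext j
      exact h.1.2.2 j (by omega) j.isLt
    · rintro rfl
      refine ⟨⟨le_refl k, le_refl k, fun j _ _ => rfl⟩, fun m hm hc => ?_⟩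
      exact absurd hc.1 (by omega)
  rw [hfilter, Finset.sum_singleton, wt]
  simp

lemma Zt_of_lt {k n : ℕ} (h : n < k) (p : ℝ) : Zt k p n = 1 := by
  rw [Zt]
  have : Finset.univ.filter (fun ω : Fin n → Bool => NR k n ω) = Finset.univ := by
    apply Finset.filter_true_of_mem
    intro ω _ m hc
    rcases hc with ⟨h1, h2, -⟩
    omega
  rw [this, wt_total]

lemma Zt_k {k : ℕ} (hk : 1 ≤ k) (p : ℝ) : Zt k p k = 1 - p ^ k := by
  have hk1 : k - 1 + 1 = k := Nat.succ_pred_eq_of_pos hk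
  have h := Zt_succ k p (k - 1)
  rw [hk1, Zt_of_lt (by omega), fk_k] at h
  linarith

lemma fk_nonneg {p : ℝ} (hp0 : 0 ≤ p) (hp1 : p ≤ 1) (k n : ℕ) : 0 ≤ fk k p n := by
  rw [fk_eq]
  exact Finset.sum_nonneg fun ω _ => wt_nonneg hp0 hp1 n ω

lemma Zt_nonneg {p : ℝ} (hp0 : 0 ≤ p) (hp1 : p ≤ 1) (k n : ℕ) : 0 ≤ Zt k p n := by
  rw [Zt]
  exact Finset.sum_nonneg fun ω _ => wt_nonneg hp0 hp1 n ω

lemma Zt_antitone {p : ℝ} (hp0 : 0 ≤ p) (hp1 : p ≤ 1) (k : ℕ) :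
    Antitone (fun n => Zt k p n) := by
  apply antitone_nat_of_succ_le
  intro n
  have h := Zt_succ k p n
  have := fk_nonneg hp0 hp1 k (n + 1)
  show Zt k p (n + 1) ≤ Zt k p n
  linarith

lemma Zt_rec {k : ℕ} (hk : 1 ≤ k) (p : ℝ) (n : ℕ) :
    Zt k p (n + (k + 1)) = Zt k p (n + k) - (1 - p) * p ^ k * Zt k p n := by
  have h1 := Zt_succ k p (n + k)
  have h2 := fk_renewal hk p n
  have he : n + (k + 1) = n + k + 1 := rfl
  rw [he] at h2 ⊢
  linarith

lemma geom_bound {k : ℕ} {p : ℝ} (hk : 1 ≤ k) (hp0 : 0 < p) (hp1 : p < 1) :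
    ∃ C ρ : ℝ, 0 < C ∧ 0 < ρ ∧ ρ < 1 ∧ ∀ n, Zt k p n ≤ C * ρ ^ n := by
  set c : ℝ := (1 - p) * p ^ k with hc
  have hc0 : 0 < c := mul_pos (by linarith) (pow_pos hp0 k)
  have hpk1 : p ^ k ≤ 1 := pow_le_one₀ (le_of_lt hp0) (le_of_lt hp1)
  have hc1 : c < 1 := by
    have : c ≤ 1 - p := by
      calc c ≤ (1 - p) * 1 := by
            apply mul_le_mul_of_nonneg_left hpk1 (by linarith)
        _ = 1 - p := mul_one _
    linarith
  set r : ℝ := 1 - c with hr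
  have hr0 : 0 < r := by rw [hr]; linarith
  have hr1 : r < 1 := by rw [hr]; linarith
  have hstep : ∀ n, Zt k p (n + (k + 1)) ≤ r * Zt k p n := by
    intro n
    have h1 := Zt_rec hk p n
    have h2 : Zt k p (n + k) ≤ Zt k p n := Zt_antitone (le_of_lt hp0) (le_of_lt hp1) k
      (Nat.le_add_right n k)
    rw [hr]
    nlinarith [Zt_nonneg (le_of_lt hp0) (le_of_lt hp1) k n]
  have hmul : ∀ m, Zt k p (m * (k + 1)) ≤ r ^ m := by
    intro m
    induction m with
    | zero => simp [Zt_of_lt (show 0 < k by omega)]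
    | succ m ih =>
      have he : (m + 1) * (k + 1) = m * (k + 1) + (k + 1) := by ring
      rw [he, pow_succ, mul_comm (r ^ m) r]
      calc Zt k p (m * (k + 1) + (k + 1)) ≤ r * Zt k p (m * (k + 1)) := hstep _
        _ ≤ r * r ^ m := by
            apply mul_le_mul_of_nonneg_left ih (le_of_lt hr0)
  -- general n
  set ρ : ℝ := r ^ (((k : ℝ) + 1)⁻¹) with hρdef
  have hρ0 : 0 < ρ := Real.rpow_pos_of_pos hr0 _
  have hρ1 : ρ < 1 := Real.rpow_lt_one (le_of_lt hr0) hr1 (by positivity)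
  have hρpow : ρ ^ (k + 1) = r := by
    rw [hρdef, ← Real.rpow_natCast (r ^ (((k : ℝ) + 1)⁻¹)) (k + 1), ← Real.rpow_mul (le_of_lt hr0)]
    push_cast
    rw [inv_mul_cancel₀ (by positivity), Real.rpow_one]
  refine ⟨(ρ⁻¹) ^ k, ρ, by positivity, hρ0, hρ1, fun n => ?_⟩
  have hdiv : n / (k + 1) * (k + 1) ≤ n := Nat.div_mul_le_self n (k + 1)
  have hmod : n < n / (k + 1) * (k + 1) + (k + 1) := by
    have h1 := Nat.div_add_mod n (k + 1)
    have h2 : n % (k + 1) < k + 1 := Nat.mod_lt _ (by omega)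
    have hcomm : (k + 1) * (n / (k + 1)) = n / (k + 1) * (k + 1) := Nat.mul_comm _ _
    omega
  have h3 : Zt k p n ≤ r ^ (n / (k + 1)) := by
    calc Zt k p n ≤ Zt k p (n / (k + 1) * (k + 1)) :=
          Zt_antitone (le_of_lt hp0) (le_of_lt hp1) k hdiv
      _ ≤ r ^ (n / (k + 1)) := hmul _
  have h4 : r ^ (n / (k + 1)) = ρ ^ ((k + 1) * (n / (k + 1))) := by
    rw [pow_mul, hρpow]
  have h5 : ρ ^ ((k + 1) * (n / (k + 1))) ≤ ρ ^ (n - k) := by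
    apply pow_le_pow_of_le_one (le_of_lt hρ0) (le_of_lt hρ1)
    have hcomm : (k + 1) * (n / (k + 1)) = n / (k + 1) * (k + 1) := Nat.mul_comm _ _
    omega
  have h6 : ρ ^ (n - k) ≤ ρ⁻¹ ^ k * ρ ^ n := by
    have hpos : (0:ℝ) < ρ ^ k := pow_pos hρ0 k
    rw [inv_pow, mul_comm, ← div_eq_mul_inv, le_div_iff₀ hpos, ← pow_add]
    apply pow_le_pow_of_le_one (le_of_lt hρ0) (le_of_lt hρ1)
    omega
  calc Zt k p n ≤ r ^ (n / (k + 1)) := h3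
    _ = ρ ^ ((k + 1) * (n / (k + 1))) := h4
    _ ≤ ρ ^ (n - k) := h5
    _ ≤ ρ⁻¹ ^ k * ρ ^ n := h6


set_option maxHeartbeats 2000000 in
/-- The variance of the geometric distribution of order `k` is
`1/(q p^k)^2 - (2k+1)/(q p^k) - p/q^2`. -/
theorem variance_geometric_order_k (k : ℕ) (hk : 1 ≤ k) (p q : ℝ) (hp0 : 0 < p) (hp1 : p < 1)
    (hq : q = 1 - p) :
    (∑' n : ℕ, (n : ℝ) ^ 2 * fk k p n) - (∑' n : ℕ, (n : ℝ) * fk k p n) ^ 2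
      = 1 / (q * p ^ k) ^ 2 - (2 * k + 1) / (q * p ^ k) - p / q ^ 2 := by
  have hp0' : (0:ℝ) ≤ p := le_of_lt hp0
  have hp1' : p ≤ 1 := le_of_lt hp1
  obtain ⟨C, ρ, hC, hρ0, hρ1, hbound⟩ := geom_bound hk hp0 hp1
  -- summability master lemma
  have hsum : ∀ (C' : ℝ) (g : ℕ → ℝ), (∀ n, 0 ≤ g n) → (∀ n, g n ≤ C' * ρ ^ n) →
      ∀ j : ℕ, Summable (fun n : ℕ => (n : ℝ) ^ j * g n) := by
    intro C' g hg hgle j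
    have hgeom : Summable (fun n : ℕ => C' * ((n:ℝ) ^ j * ρ ^ n)) :=
      (summable_pow_mul_geometric_of_norm_lt_one j
        (by rw [Real.norm_eq_abs, abs_of_pos hρ0]; exact hρ1)).mul_left C'
    apply Summable.of_nonneg_of_le (fun n => mul_nonneg (by positivity) (hg n))
      (fun n => ?_) hgeom
    calc (n:ℝ)^j * g n ≤ (n:ℝ)^j * (C' * ρ^n) :=
          mul_le_mul_of_nonneg_left (hgle n) (by positivity)
      _ = C' * ((n:ℝ)^j * ρ^n) := by ring
  have hab : ∀ n, fk k p n ≤ (C / ρ) * ρ ^ n := by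
    intro n
    match n with
    | 0 =>
      rw [fk_eq_zero_of_lt (by omega) p]
      positivity
    | n + 1 =>
      have h1 := Zt_succ k p n
      have h2 := Zt_nonneg hp0' hp1' k (n + 1)
      calc fk k p (n + 1) ≤ Zt k p n := by linarith
        _ ≤ C * ρ ^ n := hbound n
        _ = (C / ρ) * ρ ^ (n + 1) := by field_simp; ring
  have sZj : ∀ j, Summable (fun n : ℕ => (n:ℝ) ^ j * Zt k p n) :=
    hsum C _ (Zt_nonneg hp0' hp1' k) hbound
  have saj : ∀ j, Summable (fun n : ℕ => (n:ℝ) ^ j * fk k p n) :=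
    hsum (C / ρ) _ (fk_nonneg hp0' hp1' k) hab
  have sZ0 : Summable (fun n => Zt k p n) := by
    have := sZj 0; simpa using this
  have sZ1 : Summable (fun n : ℕ => (n:ℝ) * Zt k p n) := by
    have := sZj 1; simpa using this
  have sZ2 : Summable (fun n : ℕ => (n:ℝ) ^ 2 * Zt k p n) := sZj 2
  have sa0 : Summable (fun n => fk k p n) := by
    have := saj 0; simpa using this
  have sa1 : Summable (fun n : ℕ => (n:ℝ) * fk k p n) := by
    have := saj 1; simpa using this
  have sa2 : Summable (fun n : ℕ => (n:ℝ) ^ 2 * fk k p n) := saj 2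
  set T0 : ℝ := ∑' n, Zt k p n with hT0def
  set T1 : ℝ := ∑' n : ℕ, (n:ℝ) * Zt k p n with hT1def
  set T2 : ℝ := ∑' n : ℕ, (n:ℝ) ^ 2 * Zt k p n with hT2def
  set M1 : ℝ := ∑' n : ℕ, (n:ℝ) * fk k p n with hM1def
  set M2 : ℝ := ∑' n : ℕ, (n:ℝ) ^ 2 * fk k p n with hM2def
  -- shifted a-sums
  have haS1 : ∑' n : ℕ, (↑(n + 1):ℝ) * fk k p (n + 1) = M1 := by
    rw [hM1def, Summable.tsum_eq_zero_add sa1]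
    simp
  have haS2 : ∑' n : ℕ, (↑(n + 1):ℝ) ^ 2 * fk k p (n + 1) = M2 := by
    rw [hM2def, Summable.tsum_eq_zero_add sa2]
    simp
  have sas1 : Summable (fun n : ℕ => (↑(n + 1):ℝ) * fk k p (n + 1)) :=
    (summable_nat_add_iff (f := fun n : ℕ => (n:ℝ) * fk k p n) 1).mpr sa1
  have sas2 : Summable (fun n : ℕ => (↑(n + 1):ℝ) ^ 2 * fk k p (n + 1)) :=
    (summable_nat_add_iff (f := fun n : ℕ => (n:ℝ) ^ 2 * fk k p n) 1).mpr sa2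
  -- M1 = T0
  have hM1 : M1 = T0 := by
    have e1 : T1 = ∑' n : ℕ, (↑(n + 1):ℝ) * Zt k p (n + 1) := by
      rw [hT1def, Summable.tsum_eq_zero_add sZ1]
      simp
    have hrw : ∀ n : ℕ, (↑(n + 1):ℝ) * Zt k p (n + 1)
        = ((n:ℝ) * Zt k p n + Zt k p n) - (↑(n + 1):ℝ) * fk k p (n + 1) := by
      intro n
      have h := Zt_succ k p n
      rw [h]
      push_cast
      ring
    have e2 : ∑' n : ℕ, (↑(n + 1):ℝ) * Zt k p (n + 1) = (T1 + T0) - M1 := by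
      calc ∑' n : ℕ, (↑(n + 1):ℝ) * Zt k p (n + 1)
          = ∑' n : ℕ, (((n:ℝ) * Zt k p n + Zt k p n) - (↑(n + 1):ℝ) * fk k p (n + 1)) :=
            tsum_congr hrw
        _ = (∑' n : ℕ, ((n:ℝ) * Zt k p n + Zt k p n)) - ∑' n : ℕ, (↑(n + 1):ℝ) * fk k p (n + 1) :=
            Summable.tsum_sub (sZ1.add sZ0) sas1
        _ = (T1 + T0) - M1 := by rw [Summable.tsum_add sZ1 sZ0, haS1]
    have := e1.trans e2
    linarith
  -- M2 = 2 T1 + T0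
  have hM2 : M2 = 2 * T1 + T0 := by
    have e1 : T2 = ∑' n : ℕ, (↑(n + 1):ℝ) ^ 2 * Zt k p (n + 1) := by
      rw [hT2def, Summable.tsum_eq_zero_add sZ2]
      simp
    have hrw : ∀ n : ℕ, (↑(n + 1):ℝ) ^ 2 * Zt k p (n + 1)
        = ((n:ℝ) ^ 2 * Zt k p n + (2 * ((n:ℝ) * Zt k p n) + Zt k p n))
          - (↑(n + 1):ℝ) ^ 2 * fk k p (n + 1) := by
      intro n
      have h := Zt_succ k p n
      rw [h]
      push_cast
      ring
    have e2 : ∑' n : ℕ, (↑(n + 1):ℝ) ^ 2 * Zt k p (n + 1) = (T2 + (2 * T1 + T0)) - M2 := by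
      calc ∑' n : ℕ, (↑(n + 1):ℝ) ^ 2 * Zt k p (n + 1)
          = ∑' n : ℕ, (((n:ℝ) ^ 2 * Zt k p n + (2 * ((n:ℝ) * Zt k p n) + Zt k p n))
              - (↑(n + 1):ℝ) ^ 2 * fk k p (n + 1)) := tsum_congr hrw
        _ = (∑' n : ℕ, ((n:ℝ) ^ 2 * Zt k p n + (2 * ((n:ℝ) * Zt k p n) + Zt k p n)))
              - ∑' n : ℕ, (↑(n + 1):ℝ) ^ 2 * fk k p (n + 1) :=
            Summable.tsum_sub (sZ2.add ((sZ1.mul_left 2).add sZ0)) sas2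
        _ = (T2 + (2 * T1 + T0)) - M2 := by
            rw [Summable.tsum_add sZ2 ((sZ1.mul_left 2).add sZ0), Summable.tsum_add (sZ1.mul_left 2) sZ0,
              tsum_mul_left, haS2]
    have := e1.trans e2
    linarith
  -- the c-recurrence
  set c : ℝ := (1 - p) * p ^ k with hcdef
  have hc0 : 0 < c := mul_pos (by linarith) (pow_pos hp0 k)
  have hZrec : ∀ n, Zt k p (n + (k + 1)) = Zt k p (n + k) - c * Zt k p n := by
    intro n
    rw [hcdef]
    exact Zt_rec hk p n
  have hrangeK : ∑ i ∈ Finset.range k, Zt k p i = (k : ℝ) := by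
    rw [Finset.sum_congr rfl (fun i hi => Zt_of_lt (Finset.mem_range.mp hi) p)]
    simp
  have hZk : Zt k p k = 1 - p ^ k := Zt_k hk p
  -- T0 equation
  have hT0eq : c * T0 = 1 - p ^ k := by
    have hs1 : (∑ i ∈ Finset.range (k + 1), Zt k p i) + ∑' n, Zt k p (n + (k + 1)) = T0 :=
      Summable.sum_add_tsum_nat_add (k + 1) sZ0
    have hs2 : (∑ i ∈ Finset.range k, Zt k p i) + ∑' n, Zt k p (n + k) = T0 :=
      Summable.sum_add_tsum_nat_add k sZ0
    have hsplit : ∑' n, Zt k p (n + (k + 1)) = (∑' n, Zt k p (n + k)) - c * T0 := by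
      calc ∑' n, Zt k p (n + (k + 1)) = ∑' n : ℕ, (Zt k p (n + k) - c * Zt k p n) :=
            tsum_congr hZrec
        _ = (∑' n, Zt k p (n + k)) - ∑' n : ℕ, c * Zt k p n :=
            Summable.tsum_sub ((summable_nat_add_iff (f := fun n : ℕ => Zt k p n) k).mpr sZ0)
              (sZ0.mul_left c)
        _ = (∑' n, Zt k p (n + k)) - c * T0 := by rw [tsum_mul_left]
    rw [Finset.sum_range_succ, hrangeK, hZk] at hs1
    rw [hrangeK] at hs2
    rw [hsplit] at hs1
    linarith
  -- T1 equation
  have hT1eq : c * T1 = T0 - c * ((k : ℝ) + 1) * T0 - (k : ℝ) * p ^ k := by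
    have hs1 : (∑ i ∈ Finset.range (k + 1), (i:ℝ) * Zt k p i)
        + ∑' n : ℕ, (↑(n + (k + 1)):ℝ) * Zt k p (n + (k + 1)) = T1 :=
      Summable.sum_add_tsum_nat_add (k + 1) sZ1
    have hs2 : (∑ i ∈ Finset.range k, (i:ℝ) * Zt k p i)
        + ∑' n : ℕ, (↑(n + k):ℝ) * Zt k p (n + k) = T1 :=
      Summable.sum_add_tsum_nat_add k sZ1
    have hrw : ∀ n : ℕ, (↑(n + (k + 1)):ℝ) * Zt k p (n + (k + 1))
        = ((↑(n + k):ℝ) * Zt k p (n + k) + Zt k p (n + k))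
          - (c * ((n:ℝ) * Zt k p n) + (c * ((k:ℝ) + 1)) * Zt k p n) := by
      intro n
      rw [hZrec n]
      push_cast
      ring
    have hsplit : ∑' n : ℕ, (↑(n + (k + 1)):ℝ) * Zt k p (n + (k + 1))
        = ((∑' n : ℕ, (↑(n + k):ℝ) * Zt k p (n + k)) + (∑' n, Zt k p (n + k)))
          - (c * T1 + (c * ((k:ℝ) + 1)) * T0) := by
      have sZ1k : Summable (fun n : ℕ => (↑(n + k):ℝ) * Zt k p (n + k)) :=
        (summable_nat_add_iff (f := fun n : ℕ => (n:ℝ) * Zt k p n) k).mpr sZ1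
      have sZ0k : Summable (fun n : ℕ => Zt k p (n + k)) :=
        (summable_nat_add_iff (f := fun n : ℕ => Zt k p n) k).mpr sZ0
      calc ∑' n : ℕ, (↑(n + (k + 1)):ℝ) * Zt k p (n + (k + 1))
          = ∑' n : ℕ, (((↑(n + k):ℝ) * Zt k p (n + k) + Zt k p (n + k))
              - (c * ((n:ℝ) * Zt k p n) + (c * ((k:ℝ) + 1)) * Zt k p n)) := tsum_congr hrw
        _ = (∑' n : ℕ, ((↑(n + k):ℝ) * Zt k p (n + k) + Zt k p (n + k)))
              - ∑' n : ℕ, (c * ((n:ℝ) * Zt k p n) + (c * ((k:ℝ) + 1)) * Zt k p n) :=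
            Summable.tsum_sub (sZ1k.add sZ0k) ((sZ1.mul_left c).add (sZ0.mul_left _))
        _ = _ := by
            rw [Summable.tsum_add sZ1k sZ0k, Summable.tsum_add (sZ1.mul_left c) (sZ0.mul_left _),
              tsum_mul_left, tsum_mul_left]
    have hs2' : (∑ i ∈ Finset.range k, Zt k p i) + ∑' n, Zt k p (n + k) = T0 :=
      Summable.sum_add_tsum_nat_add k sZ0
    rw [Finset.sum_range_succ, hZk] at hs1
    rw [hsplit] at hs1
    rw [hrangeK] at hs2'
    push_cast at hs1 hs2
    linarith
  -- final algebra
  have hqpos : 0 < q := by rw [hq]; linarith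
  have hpk : (0:ℝ) < p ^ k := pow_pos hp0 k
  have hcq : q * p ^ k = c := by rw [hcdef, hq]
  have hT0v : T0 = (1 - p ^ k) / c := by
    field_simp
    linarith
  have hT1v : T1 = (T0 - c * ((k : ℝ) + 1) * T0 - (k : ℝ) * p ^ k) / c := by
    field_simp
    linarith
  have h1p : (1:ℝ) - p ≠ 0 := by linarith
  have hpne : p ≠ 0 := ne_of_gt hp0
  have hpkne : p ^ k ≠ 0 := pow_ne_zero _ hpne
  rw [hM2, hM1, hcq, hT1v, hT0v, hcdef, hq]
  field_simp
  ring
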